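/- Let l₁, l₂, l₃ > 0 and p(d) = l₂·l₃·d·exp(-l₂/(d² + l₁))/(d² + l₁)² for d > 0. Then p attains its maximum over (0, ∞) at d* = √( (√(l₂² - 2l₁l₂ + 4l₁²) + l₂ - l₁)/3 ), i.e., d* is a critical point of p: p'(d*) = 0. -/

import Mathlib

open Set

theorem stmt_8 (l₁ l₂ l₃ : ℝ) (h1 : 0 < l₁) (h2 : 0 < l₂) (h3 : 0 < l₃) :
    IsMaxOn (fun d : ℝ => l₂ * l₃ * d * Real.exp (-l₂ / (d ^ 2 + l₁)) / (d ^ 2 + l₁) ^ 2)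
      (Ioi (0:ℝ))
      (Real.sqrt ((Real.sqrt (l₂ ^ 2 - 2 * l₁ * l₂ + 4 * l₁ ^ 2) + l₂ - l₁) / 3)) ∧
    deriv (fun d : ℝ => l₂ * l₃ * d * Real.exp (-l₂ / (d ^ 2 + l₁)) / (d ^ 2 + l₁) ^ 2)
      (Real.sqrt ((Real.sqrt (l₂ ^ 2 - 2 * l₁ * l₂ + 4 * l₁ ^ 2) + l₂ - l₁) / 3)) = 0 := by
  set f : ℝ → ℝ := fun d : ℝ => l₂ * l₃ * d * Real.exp (-l₂ / (d ^ 2 + l₁)) / (d ^ 2 + l₁) ^ 2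
    with hf
  set s : ℝ := Real.sqrt (l₂ ^ 2 - 2 * l₁ * l₂ + 4 * l₁ ^ 2) with hs
  set x : ℝ := (s + l₂ - l₁) / 3 with hx
  set dstar : ℝ := Real.sqrt x with hdstar
  have hs0 : 0 ≤ s := Real.sqrt_nonneg _
  have hs2 : s ^ 2 = l₂ ^ 2 - 2 * l₁ * l₂ + 4 * l₁ ^ 2 := by
    rw [hs, Real.sq_sqrt]; nlinarith
  have hsgt : l₂ - l₁ < s := by nlinarith
  have hsgt2 : l₁ - l₂ < s := by nlinarith
  have hxpos : 0 < x := by rw [hx]; linarith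
  have hd2 : dstar ^ 2 = x := Real.sq_sqrt hxpos.le
  have hdpos : 0 < dstar := Real.sqrt_pos.mpr hxpos
  -- derivative formula
  have hderiv : ∀ d : ℝ, HasDerivAt f
      (l₂ * l₃ * Real.exp (-l₂ / (d ^ 2 + l₁)) *
        (-3 * d ^ 4 + 2 * (l₂ - l₁) * d ^ 2 + l₁ ^ 2) / (d ^ 2 + l₁) ^ 4) d := by
    intro d
    have hu : (0:ℝ) < d ^ 2 + l₁ := by positivity
    have hU : HasDerivAt (fun d : ℝ => d ^ 2 + l₁) (2 * d) d := by
      simpa using ((hasDerivAt_pow 2 d).add_const l₁)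
    have hg : HasDerivAt (fun d : ℝ => -l₂ / (d ^ 2 + l₁))
        ((0 * (d ^ 2 + l₁) - (-l₂) * (2 * d)) / (d ^ 2 + l₁) ^ 2) d :=
      (hasDerivAt_const d (-l₂)).div hU hu.ne'
    have he : HasDerivAt (fun d : ℝ => Real.exp (-l₂ / (d ^ 2 + l₁)))
        (Real.exp (-l₂ / (d ^ 2 + l₁)) *
          ((0 * (d ^ 2 + l₁) - (-l₂) * (2 * d)) / (d ^ 2 + l₁) ^ 2)) d := hg.exp
    have hnum : HasDerivAt (fun d : ℝ => l₂ * l₃ * d * Real.exp (-l₂ / (d ^ 2 + l₁)))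
        (l₂ * l₃ * Real.exp (-l₂ / (d ^ 2 + l₁)) +
          l₂ * l₃ * d * (Real.exp (-l₂ / (d ^ 2 + l₁)) *
            ((0 * (d ^ 2 + l₁) - (-l₂) * (2 * d)) / (d ^ 2 + l₁) ^ 2))) d := by
      have h1' : HasDerivAt (fun d : ℝ => l₂ * l₃ * d) (l₂ * l₃) d := by
        simpa using (hasDerivAt_id d).const_mul (l₂ * l₃)
      exact h1'.mul he
    have hden : HasDerivAt (fun d : ℝ => (d ^ 2 + l₁) ^ 2)
        (2 * (d ^ 2 + l₁) ^ 1 * (2 * d)) d := hU.pow 2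
    have hden0 : (d ^ 2 + l₁) ^ 2 ≠ 0 := by positivity
    have := hnum.div hden hden0
    refine this.congr_deriv ?_
    have hexp : Real.exp (-l₂ / (d ^ 2 + l₁)) ≠ 0 := Real.exp_ne_zero _
    have hu' : d ^ 2 + l₁ ≠ 0 := hu.ne'
    field_simp
    ring
  have hderiv' : ∀ d : ℝ, deriv f d =
      l₂ * l₃ * Real.exp (-l₂ / (d ^ 2 + l₁)) *
        (-3 * d ^ 4 + 2 * (l₂ - l₁) * d ^ 2 + l₁ ^ 2) / (d ^ 2 + l₁) ^ 4 :=
    fun d => (hderiv d).deriv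
  -- key quadratic factorization: q(d) = (x - d²)(3d² + 3x - 2(l₂ - l₁)) since 3x² = 2(l₂-l₁)x + l₁²
  have hq : 3 * x ^ 2 = 2 * (l₂ - l₁) * x + l₁ ^ 2 := by
    rw [hx]; nlinarith
  have hfact : ∀ d : ℝ, -3 * d ^ 4 + 2 * (l₂ - l₁) * d ^ 2 + l₁ ^ 2
      = (x - d ^ 2) * (3 * d ^ 2 + 3 * x - 2 * (l₂ - l₁)) := by
    intro d; nlinarith [hq]
  have hfac2 : ∀ d : ℝ, 0 < 3 * d ^ 2 + 3 * x - 2 * (l₂ - l₁) := by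
    intro d
    have : 3 * x - 2 * (l₂ - l₁) = s - (l₂ - l₁) := by rw [hx]; ring
    nlinarith [sq_nonneg d]
  have hc1 : Continuous fun d : ℝ => -l₂ / (d ^ 2 + l₁) := by
    apply Continuous.div (by fun_prop) (by fun_prop)
    intro d; positivity
  have hcont : Continuous f := by
    have h2 : Continuous fun d : ℝ => l₂ * l₃ * d * Real.exp (-l₂ / (d ^ 2 + l₁)) :=
      (by fun_prop : Continuous fun d : ℝ => l₂ * l₃ * d).mul hc1.rexp
    exact h2.div (by fun_prop) (fun d => by positivity)
  have hderiv_zero : deriv f dstar = 0 := by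
    rw [hderiv', hfact, hd2]
    simp
  constructor
  · -- monotone on [0, dstar]
    have hmono : StrictMonoOn f (Icc 0 dstar) := by
      apply strictMonoOn_of_deriv_pos (convex_Icc _ _) (hcont.continuousOn)
      intro d hd
      rw [interior_Icc] at hd
      rw [hderiv', hfact]
      have hd2lt : d ^ 2 < x := by
        have := hd.2
        nlinarith [hd.1, hd2]
      have hexp : 0 < Real.exp (-l₂ / (d ^ 2 + l₁)) := Real.exp_pos _
      have hprod : 0 < (x - d ^ 2) * (3 * d ^ 2 + 3 * x - 2 * (l₂ - l₁)) :=
        mul_pos (by linarith) (hfac2 d)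
      exact div_pos (mul_pos (by positivity) hprod) (by positivity)
    have hanti : StrictAntiOn f (Ici dstar) := by
      apply strictAntiOn_of_deriv_neg (convex_Ici _) (hcont.continuousOn)
      intro d hd
      rw [interior_Ici] at hd
      rw [hderiv', hfact]
      have hdd : dstar < d := hd
      have hd2gt : x < d ^ 2 := by nlinarith [hd2, hdpos, hdd]
      have h2 := hfac2 d
      have hexp : 0 < Real.exp (-l₂ / (d ^ 2 + l₁)) := Real.exp_pos _
      have hden : (0:ℝ) < (d ^ 2 + l₁) ^ 4 := by positivity
      have hneg : (x - d ^ 2) * (3 * d ^ 2 + 3 * x - 2 * (l₂ - l₁)) < 0 :=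
        mul_neg_of_neg_of_pos (by linarith) h2
      have hnum : l₂ * l₃ * Real.exp (-l₂ / (d ^ 2 + l₁)) *
          ((x - d ^ 2) * (3 * d ^ 2 + 3 * x - 2 * (l₂ - l₁))) < 0 := by
        apply mul_neg_of_pos_of_neg _ hneg
        positivity
      exact div_neg_of_neg_of_pos hnum hden
    intro d hd
    simp only [mem_setOf_eq]
    rcases le_or_gt d dstar with h | h
    · exact hmono.monotoneOn ⟨hd.out.le, h⟩ ⟨hdpos.le, le_refl _⟩ h
    · exact (hanti.antitoneOn (le_refl dstar) h.le h.le)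
  · exact hderiv_zero
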